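/- Let d be a transitive relation on a type α with decidable equality, and suppose l = p ++ a :: s is a d-serialization (List.Pairwise (fun x y => ¬ d x y) l) with no duplicate elements. Let D = {x | d a x} be the set of elements that a depends on (membership in D assumed decidable). Then the list obtained by keeping, before a, only those elements of p lying in D (in their original order), and moving the remaining elements of p to immediately after a (in their original order), namely (p.filter (· ∈ D)) ++ a :: (p.filter (· ∉ D)) ++ s, is again a d-serialization. -/

import Mathlib

/-- A list `l` is a `d`-serialization if no element depends on an element
occurring later in the list. -/
def IsSerialization {α : Type*} (d : α → α → Prop) (l : List α) : Prop :=
  List.Pairwise (fun a b => ¬ d a b) l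

/-- Moving the elements of `p` that `a` does not depend on to immediately after `a`
(keeping, before `a`, only the elements of `p` that `a` depends on, in their original
order) preserves being a `d`-serialization, for a transitive relation `d`. -/
theorem move_nondependencies_after_serialization {α : Type*} [DecidableEq α]
    (d : α → α → Prop) (htrans : Transitive d)
    (a : α) (p s : List α) [DecidablePred (d a)]
    (hser : IsSerialization d (p ++ a :: s))
    (hnodup : (p ++ a :: s).Nodup) :
    IsSerialization d
      ((p.filter fun x => decide (d a x)) ++
        a :: (p.filter fun x => decide ¬ d a x) ++ s) := by
  unfold IsSerialization at *
  rw [List.pairwise_append, List.pairwise_cons] at hser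
  obtain ⟨hp, ⟨has, hs⟩, hcross⟩ := hser
  rw [List.pairwise_append, List.pairwise_append, List.pairwise_cons]
  refine ⟨⟨hp.sublist List.filter_sublist,
      ⟨?_, hp.sublist List.filter_sublist⟩, ?_⟩, hs, ?_⟩
  · intro y hy
    have := List.mem_filter.1 hy
    simpa using this.2
  · intro x hx y hy
    rcases List.mem_cons.1 hy with rfl | hy
    · exact hcross x (List.mem_of_mem_filter hx) y List.mem_cons_self
    · have hax : d a x := by simpa using (List.mem_filter.1 hx).2
      have hay : ¬ d a y := by simpa using (List.mem_filter.1 hy).2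
      exact fun hxy => hay (htrans hax hxy)
  · intro x hx y hy
    rcases List.mem_append.1 hx with hx | hx
    · exact hcross x (List.mem_of_mem_filter hx) y (List.mem_cons_of_mem _ hy)
    rcases List.mem_cons.1 hx with rfl | hx
    · exact has y hy
    · exact hcross x (List.mem_of_mem_filter hx) y (List.mem_cons_of_mem _ hy)
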